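/- Let S be a finite 2-group and P, P' ⊴ S two normal subgroups, both dihedral of order 2^k with k ≥ 3, such that Z(P) ∩ Z(P') = 1. If P ∩ P' ≠ 1 then Z(P') ≤ P, which forces Z(P') ≤ Z(P), a contradiction; hence P ∩ P' = 1 and [P, P'] = 1, so PP' = P × P'. -/
import Mathlib

open Subgroup

/-- In a finite `p`-group, a nontrivial normal subgroup meets the center
nontrivially. -/
lemma aux_inf_center_ne_bot {p : ℕ} [Fact p.Prime] {S : Type*} [Group S] [Finite S]
    (hS : IsPGroup p S) {N : Subgroup S} (hN : N.Normal) (hbot : N ≠ ⊥) :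
    N ⊓ Subgroup.center S ≠ ⊥ := by
  have hNp : IsPGroup p N := hS.to_subgroup N
  have hnt : Nontrivial N := (Subgroup.nontrivial_iff_ne_bot N).mpr hbot
  obtain ⟨n, hn0, hn⟩ := hNp.nontrivial_iff_card.mp hnt
  have hG : IsPGroup p (ConjAct S) := hS.of_equiv ConjAct.toConjAct
  have h1 : (1 : N) ∈ MulAction.fixedPoints (ConjAct S) N := fun g => smul_one g
  obtain ⟨b, hb, hb1⟩ := hG.exists_fixed_point_of_prime_dvd_card_of_fixed_point
    (α := N) (by rw [hn]; exact dvd_pow_self p hn0.ne') h1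
  intro h
  have hbC : (b : S) ∈ Subgroup.center S := by
    rw [Subgroup.mem_center_iff]
    intro s
    have := hb (ConjAct.toConjAct s)
    have hval : s * (b : S) * s⁻¹ = (b : S) := by
      have := congrArg (Subtype.val) this
      rwa [ConjAct.Subgroup.val_conj_smul, ConjAct.smul_def, ConjAct.ofConjAct_toConjAct] at this
    calc s * (b : S) = s * (b : S) * s⁻¹ * s := by group
    _ = (b : S) * s := by rw [hval]
  have : (b : S) ∈ N ⊓ Subgroup.center S := ⟨b.2, hbC⟩
  rw [h, Subgroup.mem_bot] at this
  exact hb1 (by ext; simp [this])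

/-- Let `P`, `P'` be normal subgroups of a finite `2`-group `S`, both dihedral of
order `2^k` (`k ≥ 3`), with `Z(P) ∩ Z(P') = 1`.  Then `P ∩ P' = 1` and
`[P,P'] = 1`, so `PP' = P × P'`. -/
theorem stmt_10 (k : ℕ) (hk : 3 ≤ k) (S : Type*) [Group S] [Finite S]
    (hS : IsPGroup 2 S) (P P' : Subgroup S) (hn : P.Normal) (hn' : P'.Normal)
    (hP : Nonempty (P ≃* DihedralGroup (2 ^ (k - 1))))
    (hP' : Nonempty (P' ≃* DihedralGroup (2 ^ (k - 1))))
    (hZ : (P ⊓ Subgroup.centralizer (P : Set S)) ⊓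
        (P' ⊓ Subgroup.centralizer (P' : Set S)) = ⊥) :
    P ⊓ P' = ⊥ ∧ ⁅P, P'⁆ = ⊥ ∧ Nonempty ((P ⊔ P' : Subgroup S) ≃* (P × P')) := by
  haveI : Fact (Nat.Prime 2) := ⟨Nat.prime_two⟩
  haveI := hn
  haveI := hn'
  have h1 : P ⊓ P' = ⊥ := by
    by_contra h
    have hNn : (P ⊓ P').Normal := Subgroup.normal_inf_normal P P'
    refine aux_inf_center_ne_bot hS hNn h ?_
    rw [← le_bot_iff, ← hZ]
    refine le_inf (le_inf (inf_le_left.trans inf_le_left) ?_)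
      (le_inf (inf_le_left.trans inf_le_right) ?_)
    · exact inf_le_right.trans (Subgroup.center_le_centralizer _)
    · exact inf_le_right.trans (Subgroup.center_le_centralizer _)
  have h2 : ⁅P, P'⁆ = ⊥ := le_bot_iff.mp (h1 ▸ Subgroup.commutator_le_inf P P')
  refine ⟨h1, h2, ?_⟩
  have hcent : P ≤ Subgroup.centralizer (P' : Set S) :=
    (Subgroup.commutator_eq_bot_iff_le_centralizer).mp h2
  have hcomm : ∀ (a : P) (b : P'), Commute (P.subtype a) (P'.subtype b) := by
    intro a b
    exact (Subgroup.mem_centralizer_iff.mp (hcent a.2) (b : S) b.2).symm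
  let f : (P × P') →* S := MonoidHom.noncommCoprod P.subtype P'.subtype hcomm
  have hf : ∀ x : P × P', f x = (x.1 : S) * (x.2 : S) := fun x => rfl
  have hinj : Function.Injective f := by
    rw [← MonoidHom.ker_eq_bot_iff, eq_bot_iff]
    rintro ⟨a, b⟩ hx
    rw [MonoidHom.mem_ker, hf] at hx
    have ha : (a : S) ∈ P ⊓ P' := by
      refine ⟨a.2, ?_⟩
      have : (a : S) = (b : S)⁻¹ := by
        rw [eq_inv_iff_mul_eq_one]; exact hx
      rw [this]; exact P'.inv_mem b.2
    rw [h1, Subgroup.mem_bot] at ha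
    have hb : (b : S) = 1 := by
      have := hx; rw [ha, one_mul] at this; exact this
    rw [Subgroup.mem_bot, Prod.ext_iff]
    exact ⟨by ext; exact ha, by ext; exact hb⟩
  have hrange : f.range = P ⊔ P' := by
    apply le_antisymm
    · rintro x ⟨⟨a, b⟩, rfl⟩
      rw [hf]
      exact Subgroup.mul_mem _ (Subgroup.mem_sup_left a.2) (Subgroup.mem_sup_right b.2)
    · rw [sup_le_iff]
      constructor
      · intro x hx
        exact ⟨(⟨x, hx⟩, 1), by rw [hf]; simp⟩
      · intro x hx
        exact ⟨(1, ⟨x, hx⟩), by rw [hf]; simp⟩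
  exact ⟨((MonoidHom.ofInjective hinj).trans (MulEquiv.subgroupCongr hrange)).symm⟩
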